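/- Let (X,d,μ) be a space of homogeneous type with upper dimension ω, let δ ∈ (0,1) with δ ≤ (2A₀)^{-10} be fixed, let s ∈ (0,∞), p ∈ (ω/(ω+s), ω/s), and p* := ωp/(ω−sp). Assume A₀·δ^{p/ω} < 1 and that μ has a weak lower bound ω, i.e., there exist C > 0 and x₀ ∈ X with μ(B(x₀,r)) ≥ C·r^ω for all r ≥ 1. Then there exists a constant C̃ > 0 such that: for every measurable u : X → ℝ with ‖u‖_{Ṁ^{s,p}(X)} := inf_{g∈𝒟^s(u)} ‖g‖_{L^p(μ)} < ∞, there exists a constant C' ∈ ℝ such that u − C' ∈ L^{p*}(X) and ‖u − C'‖_{L^{p*}(μ)} ≤ C̃·‖u‖_{Ṁ^{s,p}(X)}. -/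

import Mathlib

open MeasureTheory ENNReal Filter Topology

noncomputable section

namespace SHT

variable {X : Type*}

/-- The quasi-metric ball `B(x,r) := {y : d(x,y) < r}`. -/
def ball (d : X → X → ℝ) (x : X) (r : ℝ) : Set X := {y | d x y < r}

/-- `(X, d, μ)` is a space of homogeneous type with quasi-triangle constant `A₀`
and doubling constant `Cμ`. -/
structure IsSHT [MeasurableSpace X] (d : X → X → ℝ) (μ : Measure X) (A₀ Cμ : ℝ) : Prop where
  one_le_A : 1 ≤ A₀
  nonneg : ∀ x y, 0 ≤ d x y
  eq_zero_iff : ∀ x y, d x y = 0 ↔ x = y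
  symm : ∀ x y, d x y = d y x
  triangle : ∀ x y z, d x z ≤ A₀ * (d x y + d y z)
  measurable_ball : ∀ x r, MeasurableSet (ball d x r)
  one_le_C : 1 ≤ Cμ
  ball_pos : ∀ x, ∀ r : ℝ, 0 < r → 0 < μ (ball d x r)
  ball_lt_top : ∀ x, ∀ r : ℝ, 0 < r → μ (ball d x r) < ⊤
  doubling : ∀ x, ∀ r : ℝ, 0 < r →
    μ (ball d x (2 * r)) ≤ ENNReal.ofReal Cμ * μ (ball d x r)

/-- `g` is an `s`-gradient of `u`. -/
def IsGradient [MeasurableSpace X] (d : X → X → ℝ) (μ : Measure X) (s : ℝ)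
    (u g : X → ℝ) : Prop :=
  (∀ x, 0 ≤ g x) ∧ Measurable g ∧
    ∃ E : Set X, μ E = 0 ∧ ∀ x ∉ E, ∀ y ∉ E,
      |u x - u y| ≤ d x y ^ s * (g x + g y)

/-- The homogeneous Hajłasz–Sobolev quasi-norm `‖u‖_{Ṁ^{s,p}(X)}`. -/
def hajlaszSobolevNorm [MeasurableSpace X] (d : X → X → ℝ) (μ : Measure X)
    (s p : ℝ) (u : X → ℝ) : ℝ≥0∞ :=
  ⨅ (g : X → ℝ) (_ : IsGradient d μ s u g),
    (∫⁻ x, ENNReal.ofReal (g x) ^ p ∂μ) ^ (1 / p)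

lemma exists_pow_two {t : ℝ} (ht : 1 ≤ t) :
    ∃ n : ℕ, t ≤ 2 ^ n ∧ (2:ℝ) ^ n ≤ 2 * t := by
  classical
  have h : ∃ n : ℕ, t ≤ 2 ^ n := by
    obtain ⟨n, hn⟩ := pow_unbounded_of_one_lt t (by norm_num : (1:ℝ) < 2)
    exact ⟨n, hn.le⟩
  refine ⟨Nat.find h, Nat.find_spec h, ?_⟩
  rcases Nat.eq_zero_or_pos (Nat.find h) with h0 | h0
  · rw [h0]; norm_num; linarith
  · have hmin := Nat.find_min h (m := Nat.find h - 1) (by omega)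
    push_neg at hmin
    have h2 : (2:ℝ) ^ Nat.find h = 2 * 2 ^ (Nat.find h - 1) := by
      rw [← pow_succ']
      congr 1
      omega
    rw [h2]
    nlinarith [hmin]

lemma ball_mono (d : X → X → ℝ) (x : X) {r r' : ℝ} (h : r ≤ r') :
    ball d x r ⊆ ball d x r' := fun _ hy => lt_of_lt_of_le hy h

lemma IsSHT.doubling_pow [MeasurableSpace X] {d : X → X → ℝ} {μ : Measure X} {A₀ Cμ : ℝ}
    (hS : IsSHT d μ A₀ Cμ) (x : X) {r : ℝ} (hr : 0 < r) :
    ∀ n : ℕ, μ (ball d x (2 ^ n * r)) ≤ ENNReal.ofReal Cμ ^ n * μ (ball d x r) := by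
  intro n
  induction n with
  | zero => simp
  | succ n ih =>
      have h1 : (2:ℝ) ^ (n+1) * r = 2 * (2 ^ n * r) := by ring
      calc μ (ball d x ((2:ℝ) ^ (n+1) * r)) = μ (ball d x (2 * (2 ^ n * r))) := by rw [h1]
        _ ≤ ENNReal.ofReal Cμ * μ (ball d x (2 ^ n * r)) :=
            hS.doubling x _ (by positivity)
        _ ≤ ENNReal.ofReal Cμ * (ENNReal.ofReal Cμ ^ n * μ (ball d x r)) := by
            exact mul_le_mul_right ih _
        _ = ENNReal.ofReal Cμ ^ (n+1) * μ (ball d x r) := by ring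

lemma global_lower [MeasurableSpace X] {d : X → X → ℝ} {μ : Measure X} {A₀ Cμ : ℝ}
    (hS : IsSHT d μ A₀ Cμ) {ω : ℝ} (hω : ω = Real.logb 2 Cμ) (hω0 : 0 ≤ ω)
    {C : ℝ} (hC : 0 < C) {x₀ : X}
    (hlow : ∀ r : ℝ, 1 ≤ r → ENNReal.ofReal (C * r ^ ω) ≤ μ (ball d x₀ r)) :
    ∃ b : ℝ, 0 < b ∧ ∀ (x : X) (ρ : ℝ), 0 < ρ →
      ENNReal.ofReal (b * ρ ^ ω) ≤ μ (ball d x ρ) := by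
  have hA := hS.one_le_A
  have hA0 : (0:ℝ) < A₀ := by linarith
  have hCμ1 := hS.one_le_C
  have hCμ0 : (0:ℝ) < Cμ := by linarith
  refine ⟨C / (4 * A₀) ^ ω, by positivity, ?_⟩
  set b := C / (4 * A₀) ^ ω with hbdef
  intro x ρ hρ
  set R := max 1 (max (d x x₀ + 1) ρ) with hRdef
  have hR1 : 1 ≤ R := le_max_left _ _
  have hRρ : ρ ≤ R := le_trans (le_max_right _ _) (le_max_right _ _)
  have hRd : d x x₀ + 1 ≤ R := le_trans (le_max_left _ _) (le_max_right _ _)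
  have hRpos : 0 < R := by linarith
  have ht1 : 1 ≤ 2 * A₀ * R / ρ := by
    rw [le_div_iff₀ hρ]
    nlinarith
  obtain ⟨n, hn1, hn2⟩ := exists_pow_two ht1
  -- inclusion
  have hsub : ball d x₀ R ⊆ ball d x ((2:ℝ) ^ n * ρ) := by
    intro z hz
    have hz' : d x₀ z < R := hz
    have htri := hS.triangle x x₀ z
    have hdx : d x x₀ ≤ R - 1 := by linarith
    have h1 : d x z < A₀ * (2 * R) := by
      have := hS.nonneg x₀ z
      nlinarith
    have h2 : 2 * A₀ * R ≤ 2 ^ n * ρ := by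
      rw [div_le_iff₀ hρ] at hn1
      linarith
    have : d x z < 2 ^ n * ρ := by nlinarith
    exact this
  -- the key real inequality
  have hCμeq : Cμ = (2:ℝ) ^ ω := by
    rw [hω]
    exact (Real.rpow_logb two_pos (by norm_num) hCμ0).symm
  have hkeyR : b * ρ ^ ω * Cμ ^ n ≤ C * R ^ ω := by
    have e1 : Cμ ^ n = ((2:ℝ) ^ n) ^ ω := by
      rw [hCμeq]
      rw [← Real.rpow_natCast ((2:ℝ) ^ ω) n, ← Real.rpow_mul (by norm_num : (0:ℝ) ≤ 2),
        mul_comm ω (n:ℝ), Real.rpow_mul (by norm_num : (0:ℝ) ≤ 2), Real.rpow_natCast]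
    have e2 : ((2:ℝ) ^ n) ^ ω ≤ (4 * A₀ * R / ρ) ^ ω := by
      apply Real.rpow_le_rpow (by positivity) _ hω0
      calc ((2:ℝ)) ^ n ≤ 2 * (2 * A₀ * R / ρ) := hn2
        _ = 4 * A₀ * R / ρ := by ring
    have e3 : b * ρ ^ ω * (4 * A₀ * R / ρ) ^ ω = C * R ^ ω := by
      rw [Real.div_rpow (by positivity) hρ.le, Real.mul_rpow (by positivity) hRpos.le]
      have hρω : (0:ℝ) < ρ ^ ω := Real.rpow_pos_of_pos hρ ω
      have h4A : (0:ℝ) < (4 * A₀) ^ ω := Real.rpow_pos_of_pos (by positivity) ω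
      rw [hbdef]
      field_simp
    calc b * ρ ^ ω * Cμ ^ n = b * ρ ^ ω * ((2:ℝ) ^ n) ^ ω := by rw [e1]
      _ ≤ b * ρ ^ ω * (4 * A₀ * R / ρ) ^ ω := by
          apply mul_le_mul_of_nonneg_left e2 (by positivity)
      _ = C * R ^ ω := e3
  -- ennreal chain
  have hT0 : (ENNReal.ofReal Cμ) ^ n ≠ 0 := by
    apply pow_ne_zero
    simp only [ne_eq, ENNReal.ofReal_eq_zero, not_le]
    linarith
  have hTtop : (ENNReal.ofReal Cμ) ^ n ≠ ⊤ := by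
    apply pow_ne_top ENNReal.ofReal_ne_top
  have hchain : (ENNReal.ofReal Cμ) ^ n * ENNReal.ofReal (b * ρ ^ ω) ≤
      (ENNReal.ofReal Cμ) ^ n * μ (ball d x ρ) := by
    calc (ENNReal.ofReal Cμ) ^ n * ENNReal.ofReal (b * ρ ^ ω)
        = ENNReal.ofReal (b * ρ ^ ω * Cμ ^ n) := by
          have he : ENNReal.ofReal (b * ρ ^ ω * Cμ ^ n)
              = ENNReal.ofReal (b * ρ ^ ω) * ENNReal.ofReal Cμ ^ n := by
            rw [ENNReal.ofReal_mul (by positivity), ENNReal.ofReal_pow hCμ0.le]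
          rw [he, mul_comm]
      _ ≤ ENNReal.ofReal (C * R ^ ω) := ENNReal.ofReal_le_ofReal hkeyR
      _ ≤ μ (ball d x₀ R) := hlow R hR1
      _ ≤ μ (ball d x ((2:ℝ) ^ n * ρ)) := measure_mono hsub
      _ ≤ (ENNReal.ofReal Cμ) ^ n * μ (ball d x ρ) := hS.doubling_pow x hρ n
  exact (ENNReal.mul_le_mul_iff_right hT0 hTtop).mp hchain


lemma good_point [MeasurableSpace X] {d : X → X → ℝ} {μ : Measure X} {A₀ Cμ : ℝ}
    (hS : IsSHT d μ A₀ Cμ) {p ω b : ℝ} (hp : 0 < p) (hb : 0 < b)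
    (hball : ∀ (x : X) (ρ : ℝ), 0 < ρ → ENNReal.ofReal (b * ρ ^ ω) ≤ μ (ball d x ρ))
    {g : X → ℝ} (hg0 : ∀ x, 0 ≤ g x) (hgm : Measurable g)
    {E : Set X} (hE : μ E = 0)
    (hIp : (∫⁻ x, ENNReal.ofReal (g x) ^ p ∂μ) ≠ ⊤)
    (x : X) (ρ : ℝ) (hρ : 0 < ρ) :
    ∃ y, y ∉ E ∧ d x y < ρ ∧
      g y ≤ (2/b) ^ (1/p) * ((∫⁻ z, ENNReal.ofReal (g z) ^ p ∂μ).toReal) ^ (1/p)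
        * ρ ^ (-(ω/p)) := by
  set Ip := ∫⁻ z, ENNReal.ofReal (g z) ^ p ∂μ with hIpdef
  set Gp := Ip.toReal with hGpdef
  have hGp0 : 0 ≤ Gp := ENNReal.toReal_nonneg
  set β := (2/b) ^ (1/p) * Gp ^ (1/p) * ρ ^ (-(ω/p)) with hβdef
  have hβ0 : 0 ≤ β := by positivity
  have hmeas : Measurable fun z => ENNReal.ofReal (g z) ^ p :=
    (hgm.ennreal_ofReal).pow_const p
  have hρω : (0:ℝ) < ρ ^ ω := Real.rpow_pos_of_pos hρ ω
  have hbad : μ {y | β < g y} ≤ ENNReal.ofReal (b * ρ ^ ω) / 2 := by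
    rcases eq_or_lt_of_le hGp0 with hGp | hGp
    · -- Gp = 0 : g = 0 a.e.
      have hIp0 : Ip = 0 := by
        rcases (ENNReal.toReal_eq_zero_iff Ip).mp hGp.symm with h | h
        · exact h
        · exact absurd h hIp
      have hae : ∀ᵐ z ∂μ, ENNReal.ofReal (g z) ^ p = 0 := by
        have := (lintegral_eq_zero_iff hmeas).mp hIp0
        filter_upwards [this] with z hz using hz
      have h0 : μ {z | ¬ (ENNReal.ofReal (g z) ^ p = 0)} = 0 := by
        exact hae
      have hsub : {y | β < g y} ⊆ {z | ¬ (ENNReal.ofReal (g z) ^ p = 0)} := by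
        intro y hy
        simp only [Set.mem_setOf_eq] at hy ⊢
        intro hzero
        rcases ENNReal.rpow_eq_zero_iff.mp hzero with ⟨h1, _⟩ | ⟨h1, _⟩
        · rw [ENNReal.ofReal_eq_zero] at h1
          have : 0 < g y := lt_of_le_of_lt hβ0 hy
          linarith
        · exact ENNReal.ofReal_ne_top h1
      exact le_trans (le_of_eq (measure_mono_null hsub h0)) zero_le
    · -- Gp > 0 : Markov
      have hβpos : 0 < β := by
        apply mul_pos (mul_pos (Real.rpow_pos_of_pos (by positivity) _)
          (Real.rpow_pos_of_pos hGp _)) (Real.rpow_pos_of_pos hρ _)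
      have hβp : β ^ p = (2/b) * Gp * ρ ^ (-ω) := by
        rw [hβdef, Real.mul_rpow (by positivity) (by positivity),
          Real.mul_rpow (by positivity) (by positivity),
          ← Real.rpow_mul (by positivity : (0:ℝ) ≤ 2/b),
          ← Real.rpow_mul hGp0, ← Real.rpow_mul hρ.le,
          one_div, inv_mul_cancel₀ hp.ne', Real.rpow_one, Real.rpow_one,
          show -(ω/p)*p = -ω by field_simp]
      have hε0 : ENNReal.ofReal (β ^ p) ≠ 0 := by
        simp only [ne_eq, ENNReal.ofReal_eq_zero, not_le]
        exact Real.rpow_pos_of_pos hβpos p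
      have hsub : {y | β < g y} ⊆ {z | ENNReal.ofReal (β ^ p) ≤ ENNReal.ofReal (g z) ^ p} := by
        intro y hy
        simp only [Set.mem_setOf_eq] at hy ⊢
        rw [ENNReal.ofReal_rpow_of_nonneg (hg0 y) hp.le]
        exact ENNReal.ofReal_le_ofReal (Real.rpow_le_rpow hβ0 hy.le hp.le)
      calc μ {y | β < g y}
          ≤ μ {z | ENNReal.ofReal (β ^ p) ≤ ENNReal.ofReal (g z) ^ p} := measure_mono hsub
        _ ≤ Ip / ENNReal.ofReal (β ^ p) :=
            meas_ge_le_lintegral_div hmeas.aemeasurable hε0 ENNReal.ofReal_ne_top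
        _ = ENNReal.ofReal (Gp / β ^ p) := by
            rw [ENNReal.ofReal_div_of_pos (Real.rpow_pos_of_pos hβpos p),
              hGpdef, ENNReal.ofReal_toReal hIp]
        _ = ENNReal.ofReal (b * ρ ^ ω / 2) := by
            congr 1
            rw [hβp, Real.rpow_neg hρ.le]
            field_simp
        _ = ENNReal.ofReal (b * ρ ^ ω) / 2 := by
            rw [ENNReal.ofReal_div_of_pos (by norm_num : (0:ℝ) < 2), ENNReal.ofReal_ofNat]
  -- now find a point in the ball avoiding E and the bad set
  have hμB := hS.ball_pos x ρ hρ
  have hBtop := hS.ball_lt_top x ρ hρ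
  have hlt : μ (E ∪ {y | β < g y}) < μ (ball d x ρ) :=
    calc μ (E ∪ {y | β < g y}) ≤ μ E + μ {y | β < g y} := measure_union_le _ _
      _ = μ {y | β < g y} := by rw [hE, zero_add]
      _ ≤ ENNReal.ofReal (b * ρ ^ ω) / 2 := hbad
      _ ≤ μ (ball d x ρ) / 2 := ENNReal.div_le_div_right (hball x ρ hρ) 2
      _ < μ (ball d x ρ) := ENNReal.half_lt_self hμB.ne' hBtop.ne
  have hne : ¬ (ball d x ρ ⊆ E ∪ {y | β < g y}) := fun hsubs =>
    absurd (measure_mono hsubs) (not_le.mpr hlt)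
  obtain ⟨y, hyB, hyE⟩ := Set.not_subset.mp hne
  exact ⟨y, fun h => hyE (Or.inl h), hyB,
    le_of_not_gt (fun h => hyE (Or.inr h))⟩
lemma exists_c [MeasurableSpace X] {d : X → X → ℝ} {μ : Measure X} {A₀ Cμ : ℝ}
    (hS : IsSHT d μ A₀ Cμ) {s p ω b : ℝ} (hs : 0 < s) (hp : 0 < p) (hb : 0 < b)
    (hq : s - ω/p < 0)
    (hball : ∀ (x : X) (ρ : ℝ), 0 < ρ → ENNReal.ofReal (b * ρ ^ ω) ≤ μ (ball d x ρ))
    (x₀ : X)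
    {u g : X → ℝ} (hg0 : ∀ x, 0 ≤ g x) (hgm : Measurable g)
    {E : Set X} (hE : μ E = 0)
    (hgrad : ∀ x ∉ E, ∀ y ∉ E, |u x - u y| ≤ d x y ^ s * (g x + g y))
    (hIp : (∫⁻ z, ENNReal.ofReal (g z) ^ p ∂μ) ≠ ⊤) :
    ∃ c : ℝ, ∀ x ∉ E, ∀ r : ℝ, 0 < r →
      |u x - c| ≤ r ^ s * g x +
        ((2/b) ^ (1/p) * (1 + 2 * (3*A₀) ^ s / (1 - (2:ℝ) ^ (s - ω/p))) *
          ((∫⁻ z, ENNReal.ofReal (g z) ^ p ∂μ).toReal) ^ (1/p)) * r ^ (s - ω/p) := by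
  have hA := hS.one_le_A
  have hA0 : (0:ℝ) < A₀ := by linarith
  set Ip := ∫⁻ z, ENNReal.ofReal (g z) ^ p ∂μ with hIpdef
  set Gp := Ip.toReal with hGpdef
  have hGp0 : 0 ≤ Gp := ENNReal.toReal_nonneg
  set κ := (2/b) ^ (1/p) with hκdef
  have hκ0 : 0 < κ := Real.rpow_pos_of_pos (by positivity) _
  set GG := Gp ^ (1/p) with hGGdef
  have hGG0 : 0 ≤ GG := Real.rpow_nonneg hGp0 _
  set θ := (2:ℝ) ^ (s - ω/p) with hθdef
  have hθ0 : 0 < θ := Real.rpow_pos_of_pos two_pos _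
  have hθ1 : θ < 1 := Real.rpow_lt_one_of_one_lt_of_neg one_lt_two hq
  have h1θ : 0 < 1 - θ := by linarith
  have hωp : 0 < ω/p := by linarith
  have hpow2 : ∀ j : ℕ, ((2:ℝ)^j) ^ (s - ω/p) = θ ^ j := by
    intro j
    rw [hθdef, ← Real.rpow_natCast (2:ℝ) j, ← Real.rpow_mul (by norm_num),
      mul_comm (j:ℝ) _, Real.rpow_mul (by norm_num), Real.rpow_natCast]
  have hpow : ∀ j : ℕ, ((2:ℝ)^j) ^ s * ((2:ℝ)^j) ^ (-(ω/p)) = θ ^ j := by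
    intro j
    rw [← Real.rpow_add (by positivity), show s + -(ω/p) = s - ω/p by ring, hpow2 j]
  -- the chain points
  have hZex : ∀ (w : X) (r : ℝ) (j : ℕ), ∃ y, 0 < r →
      (y ∉ E ∧ d w y < 2^j * r ∧ g y ≤ κ * GG * ((2:ℝ)^j * r) ^ (-(ω/p))) := by
    intro w r j
    by_cases hr : 0 < r
    · obtain ⟨y, h1, h2, h3⟩ := good_point hS hp hb hball hg0 hgm hE hIp w
        ((2:ℝ)^j * r) (by positivity)
      exact ⟨y, fun _ => ⟨h1, h2, by rw [hκdef, hGGdef]; exact h3⟩⟩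
    · exact ⟨w, fun h => absurd h hr⟩
  choose Z hZ using hZex
  -- consecutive step estimate
  have hstep : ∀ (w : X) (r : ℝ), 0 < r → ∀ j : ℕ,
      dist (u (Z w r j)) (u (Z w r (j+1))) ≤ (2*(3*A₀)^s*κ*GG*r^(s - ω/p)) * θ ^ j := by
    intro w r hr j
    obtain ⟨hjE, hjd, hjg⟩ := hZ w r j hr
    obtain ⟨hkE, hkd, hkg⟩ := hZ w r (j+1) hr
    have hρj : (0:ℝ) < 2^j * r := by positivity
    have hd : d (Z w r j) (Z w r (j+1)) ≤ 3*A₀*(2^j*r) := by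
      have htri := hS.triangle (Z w r j) w (Z w r (j+1))
      have hsy : d (Z w r j) w = d w (Z w r j) := hS.symm _ _
      have h2 : (2:ℝ)^(j+1)*r = 2*(2^j*r) := by ring
      rw [h2] at hkd
      nlinarith [hS.nonneg w (Z w r j), hS.nonneg w (Z w r (j+1))]
    have hmono : ((2:ℝ)^(j+1)*r) ^ (-(ω/p)) ≤ ((2:ℝ)^j*r) ^ (-(ω/p)) := by
      apply Real.rpow_le_rpow_of_nonpos hρj (by rw [pow_succ]; nlinarith) (by linarith)
    have hgsum : g (Z w r j) + g (Z w r (j+1)) ≤ 2*(κ*GG)*((2:ℝ)^j*r) ^ (-(ω/p)) := by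
      have := mul_le_mul_of_nonneg_left hmono (by positivity : (0:ℝ) ≤ κ*GG)
      nlinarith [hjg, hkg]
    have hub := hgrad _ hjE _ hkE
    have hds : d (Z w r j) (Z w r (j+1)) ^ s ≤ (3*A₀*(2^j*r))^s :=
      Real.rpow_le_rpow (hS.nonneg _ _) hd hs.le
    have hcb : |u (Z w r j) - u (Z w r (j+1))| ≤
        (3*A₀*(2^j*r))^s * (2*(κ*GG)*((2:ℝ)^j*r) ^ (-(ω/p))) :=
      le_trans hub (mul_le_mul hds hgsum (add_nonneg (hg0 _) (hg0 _)) (by positivity))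
    rw [Real.dist_eq]
    refine le_trans hcb (le_of_eq ?_)
    rw [Real.mul_rpow (by positivity : (0:ℝ) ≤ 3*A₀) (by positivity : (0:ℝ) ≤ 2^j*r)]
    have hcomb : ((2:ℝ)^j*r)^s * ((2:ℝ)^j*r) ^ (-(ω/p)) = r^(s - ω/p) * θ^j := by
      rw [Real.mul_rpow (by positivity : (0:ℝ) ≤ (2:ℝ)^j) hr.le,
        Real.mul_rpow (by positivity : (0:ℝ) ≤ (2:ℝ)^j) hr.le]
      have h2 : r^s * r ^ (-(ω/p)) = r^(s - ω/p) := by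
        rw [← Real.rpow_add hr, show s + -(ω/p) = s - ω/p by ring]
      calc ((2:ℝ)^j)^s * r^s * (((2:ℝ)^j) ^ (-(ω/p)) * r ^ (-(ω/p)))
          = (((2:ℝ)^j)^s * ((2:ℝ)^j) ^ (-(ω/p))) * (r^s * r ^ (-(ω/p))) := by ring
        _ = θ^j * r^(s - ω/p) := by rw [hpow j, h2]
        _ = r^(s - ω/p) * θ^j := by ring
    calc (3*A₀)^s * ((2:ℝ)^j*r)^s * (2*(κ*GG)*((2:ℝ)^j*r) ^ (-(ω/p)))
        = 2*(3*A₀)^s*κ*GG * (((2:ℝ)^j*r)^s * ((2:ℝ)^j*r) ^ (-(ω/p))) := by ring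
      _ = 2*(3*A₀)^s*κ*GG * (r^(s - ω/p) * θ^j) := by rw [hcomb]
      _ = (2*(3*A₀)^s*κ*GG*r^(s - ω/p)) * θ^j := by ring
  -- Cauchy limits
  have hCS : ∀ (w : X) (r : ℝ), 0 < r → ∃ L,
      Tendsto (fun j => u (Z w r j)) atTop (𝓝 L) ∧
      dist (u (Z w r 0)) L ≤ (2*(3*A₀)^s*κ*GG*r^(s - ω/p)) / (1-θ) := by
    intro w r hr
    have hcs : CauchySeq (fun j => u (Z w r j)) :=
      cauchySeq_of_le_geometric θ _ hθ1 (hstep w r hr)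
    obtain ⟨L, hL⟩ := cauchySeq_tendsto_of_complete hcs
    exact ⟨L, hL, dist_le_of_le_geometric_of_tendsto₀ θ _ hθ1 (hstep w r hr) hL⟩
  obtain ⟨c, hcT, -⟩ := hCS x₀ 1 one_pos
  refine ⟨c, ?_⟩
  intro x hx r hr
  obtain ⟨L, hLT, hL0⟩ := hCS x r hr
  -- the two chains have the same limit
  have hLc : L = c := by
    have hdiff : Tendsto (fun j => u (Z x r j) - u (Z x₀ 1 j)) atTop (𝓝 (L - c)) :=
      hLT.sub hcT
    set M := A₀*r + A₀^2*(d x x₀) + A₀^2 with hMdef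
    have hM0 : 0 < M := by nlinarith [hS.nonneg x x₀]
    set M₂ := κ*GG*(r^(-(ω/p)) + 1) with hM2def
    have hM20 : 0 ≤ M₂ := by positivity
    have hsq : Tendsto (fun j => u (Z x r j) - u (Z x₀ 1 j)) atTop (𝓝 0) := by
      apply squeeze_zero_norm (a := fun j => (M^s*M₂) * θ^j)
      · intro j
        obtain ⟨hjE, hjd, hjg⟩ := hZ x r j hr
        obtain ⟨hkE, hkd, hkg⟩ := hZ x₀ 1 j one_pos
        have h2j : (1:ℝ) ≤ 2^j := one_le_pow₀ (by norm_num)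
        have hd : d (Z x r j) (Z x₀ 1 j) ≤ 2^j * M := by
          have t1 := hS.triangle (Z x r j) x (Z x₀ 1 j)
          have t2 := hS.triangle x x₀ (Z x₀ 1 j)
          have s1 : d (Z x r j) x = d x (Z x r j) := hS.symm _ _
          rw [mul_one] at hkd
          rw [s1] at t1
          have hd0 := hS.nonneg x x₀
          have step1 : d x (Z x₀ 1 j) ≤ A₀ * (d x x₀ + 2^j) :=
            t2.trans (mul_le_mul_of_nonneg_left (by linarith) hA0.le)
          have step2 : d (Z x r j) (Z x₀ 1 j) ≤ A₀ * (2^j*r + A₀*(d x x₀ + 2^j)) := by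
            refine t1.trans (mul_le_mul_of_nonneg_left ?_ hA0.le)
            linarith
          refine step2.trans ?_
          have e : 2^j * M - A₀*(2^j*r + A₀*(d x x₀ + 2^j))
              = A₀^2 * (d x x₀) * (2^j - 1) := by rw [hMdef]; ring
          have hnn : 0 ≤ A₀^2 * (d x x₀) * (2^j - 1) :=
            mul_nonneg (mul_nonneg (sq_nonneg A₀) hd0) (by linarith)
          linarith
        have hds : d (Z x r j) (Z x₀ 1 j) ^ s ≤ ((2:ℝ)^j * M)^s :=
          Real.rpow_le_rpow (hS.nonneg _ _) hd hs.le
        have e1 : ((2:ℝ)^j*r) ^ (-(ω/p)) = ((2:ℝ)^j) ^ (-(ω/p)) * r ^ (-(ω/p)) :=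
          Real.mul_rpow (by positivity) hr.le
        have hjg' : g (Z x r j) ≤ κ*GG*(((2:ℝ)^j) ^ (-(ω/p)) * r ^ (-(ω/p))) := by
          rw [← e1]; exact hjg
        have hkg' : g (Z x₀ 1 j) ≤ κ*GG*((2:ℝ)^j) ^ (-(ω/p)) := by
          have : ((2:ℝ)^j * 1 : ℝ) = (2:ℝ)^j := mul_one _
          rw [this] at hkg; exact hkg
        have hgsum : g (Z x r j) + g (Z x₀ 1 j) ≤ M₂ * ((2:ℝ)^j) ^ (-(ω/p)) := by
          rw [hM2def]
          calc g (Z x r j) + g (Z x₀ 1 j)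
              ≤ κ*GG*(((2:ℝ)^j) ^ (-(ω/p)) * r ^ (-(ω/p))) + κ*GG*((2:ℝ)^j) ^ (-(ω/p)) :=
                add_le_add hjg' hkg'
            _ = κ*GG*(r^(-(ω/p)) + 1) * ((2:ℝ)^j) ^ (-(ω/p)) := by ring
        have hub := hgrad _ hjE _ hkE
        have hcb : |u (Z x r j) - u (Z x₀ 1 j)| ≤ ((2:ℝ)^j * M)^s * (M₂ * ((2:ℝ)^j) ^ (-(ω/p))) :=
          le_trans hub (mul_le_mul hds hgsum (add_nonneg (hg0 _) (hg0 _)) (by positivity))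
        have heq : ((2:ℝ)^j * M)^s * (M₂ * ((2:ℝ)^j) ^ (-(ω/p))) = (M^s*M₂) * θ^j := by
          rw [Real.mul_rpow (by positivity : (0:ℝ) ≤ (2:ℝ)^j) hM0.le]
          linear_combination (M^s*M₂) * (hpow j)
        rw [Real.norm_eq_abs]
        rw [heq] at hcb
        exact hcb
      · have := (tendsto_pow_atTop_nhds_zero_of_lt_one hθ0.le hθ1).const_mul (M^s*M₂)
        rwa [mul_zero] at this
    have := tendsto_nhds_unique hdiff hsq
    linarith [this]
  -- assemble the final bound
  obtain ⟨h0E, h0d, h0g⟩ := hZ x r 0 hr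
  have h0d' : d x (Z x r 0) < r := by
    have : ((2:ℝ)^(0:ℕ) * r) = r := by norm_num
    rw [this] at h0d; exact h0d
  have h0g' : g (Z x r 0) ≤ κ*GG*r ^ (-(ω/p)) := by
    have : ((2:ℝ)^(0:ℕ) * r) = r := by norm_num
    rw [this] at h0g; exact h0g
  have hub := hgrad x hx _ h0E
  have hds : d x (Z x r 0) ^ s ≤ r^s := by
    have := Real.rpow_le_rpow (hS.nonneg x (Z x r 0)) h0d'.le hs.le
    exact this
  have t1 : |u x - u (Z x r 0)| ≤ r^s * (g x + κ*GG*r ^ (-(ω/p))) :=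
    le_trans hub (mul_le_mul hds (by linarith [h0g']) (add_nonneg (hg0 _) (hg0 _))
      (by positivity))
  have t2 : |u (Z x r 0) - c| ≤ (2*(3*A₀)^s*κ*GG*r^(s - ω/p)) / (1-θ) := by
    rw [Real.dist_eq, hLc] at hL0
    exact hL0
  have hsplit : |u x - c| ≤ |u x - u (Z x r 0)| + |u (Z x r 0) - c| := abs_sub_le _ _ _
  have hrs : r^s * r ^ (-(ω/p)) = r^(s - ω/p) := by
    rw [← Real.rpow_add hr, show s + -(ω/p) = s - ω/p by ring]
  have t1' : |u x - u (Z x r 0)| ≤ r^s * g x + κ*GG*r^(s - ω/p) := by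
    have : r^s * (g x + κ*GG*r ^ (-(ω/p))) = r^s * g x + κ*GG*(r^s * r ^ (-(ω/p))) := by ring
    rw [this, hrs] at t1
    exact t1
  have hexp : (κ*(1 + 2*(3*A₀)^s/(1-θ))*GG)*r^(s - ω/p)
      = κ*GG*r^(s - ω/p) + (2*(3*A₀)^s*κ*GG*r^(s - ω/p))/(1-θ) := by
    field_simp
  linarith [t1', t2, hsplit, hexp]
lemma opt_bound {s e A v t σ : ℝ} (hs : 0 < s) (hse : s < e)
    (hA : 0 ≤ A) (hv : 0 ≤ v) (hσ : σ = s / e)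
    (hbound : ∀ r : ℝ, 0 < r → |t| ≤ r ^ s * v + A * r ^ (s - e)) :
    |t| ≤ 2 * A ^ σ * v ^ (1 - σ) := by
  have he : 0 < e := lt_trans hs hse
  have hσ0 : 0 < σ := by rw [hσ]; positivity
  have hσ1 : σ < 1 := by rw [hσ, div_lt_one he]; exact hse
  have hrhs0 : 0 ≤ 2 * A ^ σ * v ^ (1 - σ) := by positivity
  rcases eq_or_lt_of_le hv with hv0 | hv0
  · -- v = 0
    refine le_trans ?_ hrhs0
    refine _root_.le_of_forall_pos_le_add ?_ |>.trans (le_refl 0)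
    intro ε hε
    rw [zero_add]
    rcases eq_or_lt_of_le hA with hA0 | hA0
    · have h1 := hbound 1 one_pos
      rw [Real.one_rpow, Real.one_rpow, ← hv0, ← hA0] at h1
      linarith
    · have hr : 0 < (A/ε : ℝ) := by positivity
      set r := (A/ε) ^ (e-s)⁻¹ with hrdef
      have hr0 : 0 < r := Real.rpow_pos_of_pos hr _
      have hres : r ^ (s-e) = ε/A := by
        rw [hrdef, show s - e = -(e-s) by ring,
          Real.rpow_neg (Real.rpow_nonneg hr.le _),
          Real.rpow_inv_rpow hr.le (by linarith : e - s ≠ 0), inv_div]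
      have hb := hbound r hr0
      rw [hres, ← hv0, mul_zero, zero_add] at hb
      have : A * (ε/A) = ε := by field_simp
      linarith
  · rcases eq_or_lt_of_le hA with hA0 | hA0
    · -- A = 0
      have hrhs : 2 * A ^ σ * v ^ (1 - σ) = 0 := by
        rw [← hA0, Real.zero_rpow hσ0.ne']; ring
      rw [hrhs]
      refine _root_.le_of_forall_pos_le_add ?_ |>.trans (le_refl 0)
      intro ε hε
      rw [zero_add]
      have hr : 0 < (ε/v : ℝ) := by positivity
      set r := (ε/v) ^ s⁻¹ with hrdef
      have hr0 : 0 < r := Real.rpow_pos_of_pos hr _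
      have hres : r ^ s = ε/v := by
        rw [hrdef, Real.rpow_inv_rpow hr.le hs.ne']
      have hb := hbound r hr0
      rw [hres, ← hA0, zero_mul, add_zero] at hb
      have : ε/v * v = ε := by field_simp
      linarith
    · -- A > 0, v > 0
      have hAv : 0 < A/v := by positivity
      set r := (A/v) ^ e⁻¹ with hrdef
      have hr0 : 0 < r := Real.rpow_pos_of_pos hAv _
      have key1 : r ^ s = (A/v) ^ σ := by
        rw [hrdef, ← Real.rpow_mul hAv.le, hσ]
        congr 1
        field_simp
      have key2 : r ^ (s-e) = (A/v) ^ (σ-1) := by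
        rw [hrdef, ← Real.rpow_mul hAv.le]
        congr 1
        rw [hσ]
        field_simp
      have e1 : r ^ s * v = A ^ σ * v ^ (1-σ) := by
        rw [key1, Real.div_rpow hA0.le hv0.le, Real.rpow_sub hv0 1 σ, Real.rpow_one]
        field_simp
      have e2 : A * r ^ (s-e) = A ^ σ * v ^ (1-σ) := by
        rw [key2, Real.div_rpow hA0.le hv0.le, Real.rpow_sub hA0 σ 1,
          Real.rpow_sub hv0 σ 1, Real.rpow_one, Real.rpow_one,
          Real.rpow_sub hv0 1 σ, Real.rpow_one]
        have hvσ : 0 < v ^ σ := Real.rpow_pos_of_pos hv0 σ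
        have hAσ : 0 < A ^ σ := Real.rpow_pos_of_pos hA0 σ
        field_simp
      have hb := hbound r hr0
      rw [e1, e2] at hb
      linarith

lemma mu_univ_top [MeasurableSpace X] {d : X → X → ℝ} {μ : Measure X}
    {C ω : ℝ} (hC : 0 < C) (hω : 0 < ω) {x₀ : X}
    (hlow : ∀ r : ℝ, 1 ≤ r → ENNReal.ofReal (C * r ^ ω) ≤ μ (ball d x₀ r)) :
    μ Set.univ = ⊤ := by
  by_contra h
  set M := (μ Set.univ).toReal with hMdef
  have hμM : μ Set.univ = ENNReal.ofReal M := (ENNReal.ofReal_toReal h).symm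
  have hM0 : 0 ≤ M := ENNReal.toReal_nonneg
  set t := (M+1)/C with htdef
  have ht0 : 0 < t := by positivity
  set r := max 1 (t ^ ω⁻¹) with hrdef
  have hr1 : 1 ≤ r := le_max_left _ _
  have hrt : t ^ ω⁻¹ ≤ r := le_max_right _ _
  have hrω : t ≤ r ^ ω :=
    calc t = (t ^ ω⁻¹) ^ ω := (Real.rpow_inv_rpow ht0.le hω.ne').symm
      _ ≤ r ^ ω := Real.rpow_le_rpow (Real.rpow_nonneg ht0.le _) hrt hω.le
  have hkey : M + 1 ≤ C * r ^ ω := by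
    rw [htdef, div_le_iff₀ hC] at hrω
    linarith
  have hle : ENNReal.ofReal (M+1) ≤ ENNReal.ofReal M :=
    calc ENNReal.ofReal (M+1) ≤ ENNReal.ofReal (C * r ^ ω) := ENNReal.ofReal_le_ofReal hkey
      _ ≤ μ (ball d x₀ r) := hlow r hr1
      _ ≤ μ Set.univ := measure_mono (Set.subset_univ _)
      _ = ENNReal.ofReal M := hμM
  have := (ENNReal.ofReal_le_ofReal_iff hM0).mp hle
  linarith

lemma c_unique [MeasurableSpace X] {μ : Measure X} (hX : μ Set.univ = ⊤)
    {u : X → ℝ} (hu : Measurable u) {pst : ℝ} (hpst : 0 < pst) {c₁ c₂ : ℝ}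
    (h1 : (∫⁻ x, ENNReal.ofReal |u x - c₁| ^ pst ∂μ) < ⊤)
    (h2 : (∫⁻ x, ENNReal.ofReal |u x - c₂| ^ pst ∂μ) < ⊤) : c₁ = c₂ := by
  by_contra hne
  set δ := |c₁ - c₂| / 2 with hδdef
  have habs0 : 0 < |c₁ - c₂| := abs_pos.mpr (sub_ne_zero.mpr hne)
  have hδ0 : 0 < δ := by rw [hδdef]; linarith
  set ε := ENNReal.ofReal (δ ^ pst) with hεdef
  have hε0 : ε ≠ 0 := by
    simp only [hεdef, ne_eq, ENNReal.ofReal_eq_zero, not_le]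
    exact Real.rpow_pos_of_pos hδ0 _
  have hεt : ε ≠ ⊤ := ENNReal.ofReal_ne_top
  have hm : ∀ c : ℝ, Measurable fun x => ENNReal.ofReal |u x - c| ^ pst := fun c =>
    (((hu.sub measurable_const).abs).ennreal_ofReal).pow_const pst
  have hmem : ∀ (c : ℝ) (x : X), δ ≤ |u x - c| → ε ≤ ENNReal.ofReal |u x - c| ^ pst := by
    intro c x h
    rw [hεdef, ENNReal.ofReal_rpow_of_nonneg (abs_nonneg _) hpst.le]
    exact ENNReal.ofReal_le_ofReal (Real.rpow_le_rpow hδ0.le h hpst.le)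
  have hcover : (Set.univ : Set X) ⊆ {x | ε ≤ ENNReal.ofReal |u x - c₁| ^ pst} ∪
      {x | ε ≤ ENNReal.ofReal |u x - c₂| ^ pst} := by
    intro x _
    have h := abs_sub (u x - c₂) (u x - c₁)
    have e : (u x - c₂) - (u x - c₁) = c₁ - c₂ := by ring
    rw [e] at h
    have hor : δ ≤ |u x - c₁| ∨ δ ≤ |u x - c₂| := by
      by_contra hcon
      push_neg at hcon
      obtain ⟨a1, a2⟩ := hcon
      rw [hδdef] at a1 a2
      linarith
    rcases hor with hh | hh
    · exact Or.inl (hmem c₁ x hh)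
    · exact Or.inr (hmem c₂ x hh)
  have hb1 := meas_ge_le_lintegral_div (hm c₁).aemeasurable hε0 hεt (μ := μ)
  have hb2 := meas_ge_le_lintegral_div (hm c₂).aemeasurable hε0 hεt (μ := μ)
  have htop : (⊤:ℝ≥0∞) ≤ (∫⁻ x, ENNReal.ofReal |u x - c₁| ^ pst ∂μ) / ε +
      (∫⁻ x, ENNReal.ofReal |u x - c₂| ^ pst ∂μ) / ε :=
    calc (⊤:ℝ≥0∞) = μ Set.univ := hX.symm
      _ ≤ μ ({x | ε ≤ ENNReal.ofReal |u x - c₁| ^ pst} ∪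
            {x | ε ≤ ENNReal.ofReal |u x - c₂| ^ pst}) := measure_mono hcover
      _ ≤ μ {x | ε ≤ ENNReal.ofReal |u x - c₁| ^ pst} +
            μ {x | ε ≤ ENNReal.ofReal |u x - c₂| ^ pst} := measure_union_le _ _
      _ ≤ _ := add_le_add hb1 hb2
  have hfin : (∫⁻ x, ENNReal.ofReal |u x - c₁| ^ pst ∂μ) / ε +
      (∫⁻ x, ENNReal.ofReal |u x - c₂| ^ pst ∂μ) / ε < ⊤ :=
    ENNReal.add_lt_top.mpr ⟨ENNReal.div_lt_top h1.ne hε0, ENNReal.div_lt_top h2.ne hε0⟩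
  exact absurd (lt_of_le_of_lt htop hfin) (lt_irrefl ⊤)

/-- Let `s > 0`, `p ∈ (ω/(ω+s), ω/s)`, `p* = ωp/(ω-sp)`, assume
`A₀ δ^{p/ω} < 1` and that `μ` has a weak lower bound `ω`. Then there is `C̃ > 0`
such that every measurable `u` with `‖u‖_{Ṁ^{s,p}(X)} < ∞` admits a constant
`C' ∈ ℝ` with `u - C' ∈ L^{p*}(X)` and `‖u - C'‖_{L^{p*}} ≤ C̃ ‖u‖_{Ṁ^{s,p}(X)}`. -/
theorem sub_const_in_Lpst
    [MeasurableSpace X] (d : X → X → ℝ) (μ : Measure X) (A₀ Cμ δ : ℝ)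
    (hSHT : IsSHT d μ A₀ Cμ)
    (hδ0 : 0 < δ) (hδ1 : δ < 1) (hδA : δ ≤ (2 * A₀) ^ (-10 : ℤ))
    (ω : ℝ) (hω : ω = Real.logb 2 Cμ)
    (s p pst : ℝ) (hs : 0 < s) (hp0 : ω / (ω + s) < p) (hp1 : p < ω / s)
    (hpst : pst = ω * p / (ω - s * p))
    (hAδ : A₀ * δ ^ (p / ω) < 1)
    (hlow : ∃ C : ℝ, 0 < C ∧ ∃ x₀ : X, ∀ r : ℝ, 1 ≤ r →
      ENNReal.ofReal (C * r ^ ω) ≤ μ (ball d x₀ r)) :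
    ∃ Ct : ℝ, 0 < Ct ∧
      ∀ u : X → ℝ, Measurable u → hajlaszSobolevNorm d μ s p u < ⊤ →
        ∃ C' : ℝ,
          (∫⁻ x, ENNReal.ofReal |u x - C'| ^ pst ∂μ) < ⊤ ∧
          (∫⁻ x, ENNReal.ofReal |u x - C'| ^ pst ∂μ) ^ (1 / pst) ≤
            ENNReal.ofReal Ct * hajlaszSobolevNorm d μ s p u := by
  obtain ⟨C, hC, x₀, hlow'⟩ := hlow
  have hA := hSHT.one_le_A
  have hA0 : (0:ℝ) < A₀ := by linarith
  have hω0 : 0 ≤ ω := by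
    rw [hω]
    exact Real.logb_nonneg one_lt_two hSHT.one_le_C
  have hωpos : 0 < ω := by
    rcases eq_or_lt_of_le hω0 with h | h
    · exfalso
      rw [← h, zero_div] at hp1
      rw [← h, zero_div] at hp0
      linarith
    · exact h
  have hppos : 0 < p := lt_trans (div_pos hωpos (by linarith)) hp0
  have hsp : s * p < ω := by
    rw [lt_div_iff₀ hs] at hp1
    linarith
  have hq : s - ω/p < 0 := by
    have : s < ω/p := (lt_div_iff₀ hppos).mpr (by linarith)
    linarith
  have hωsp : 0 < ω - s*p := by linarith
  have hpstpos : 0 < pst := by rw [hpst]; positivity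
  obtain ⟨b, hb, hball⟩ := global_lower hSHT hω hω0 hC hlow'
  set θ := (2:ℝ) ^ (s - ω/p) with hθdef
  have hθ0 : 0 < θ := Real.rpow_pos_of_pos two_pos _
  have hθ1 : θ < 1 := Real.rpow_lt_one_of_one_lt_of_neg one_lt_two hq
  have h1θ : 0 < 1 - θ := by linarith
  set K₁ := (2/b) ^ (1/p) * (1 + 2 * (3*A₀) ^ s / (1 - θ)) with hK₁def
  have hK₁ : 0 < K₁ := by
    apply mul_pos (Real.rpow_pos_of_pos (by positivity) _)
    positivity
  set σ := s * p / ω with hσdef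
  have hσ0 : 0 < σ := by positivity
  have hσ1 : σ < 1 := by rw [hσdef, div_lt_one hωpos]; linarith
  set Ct := 2 * K₁ ^ σ with hCtdef
  have hCt : 0 < Ct := by positivity
  refine ⟨Ct, hCt, ?_⟩
  intro u hu hnorm
  have hμtop : μ Set.univ = ⊤ := mu_univ_top hC hωpos hlow'
  have hτpst : (1 - σ) * pst = p := by
    rw [hσdef, hpst]
    field_simp
    try ring
  have hexp : σ/p + 1/pst = 1/p := by
    rw [hσdef, hpst]
    field_simp
    try ring
  -- the per-gradient estimate
  have key : ∀ g : X → ℝ, IsGradient d μ s u g →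
      (∫⁻ z, ENNReal.ofReal (g z) ^ p ∂μ) ≠ ⊤ →
      ∃ c : ℝ, (∫⁻ x, ENNReal.ofReal |u x - c| ^ pst ∂μ) < ⊤ ∧
        (∫⁻ x, ENNReal.ofReal |u x - c| ^ pst ∂μ) ^ (1/pst) ≤
          ENNReal.ofReal Ct * (∫⁻ z, ENNReal.ofReal (g z) ^ p ∂μ) ^ (1/p) := by
    rintro g ⟨hg0, hgm, E, hE, hgrad⟩ hIp
    set Ip := ∫⁻ z, ENNReal.ofReal (g z) ^ p ∂μ with hIpdef
    set Gp := Ip.toReal with hGpdef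
    have hGp0 : 0 ≤ Gp := ENNReal.toReal_nonneg
    set GG := Gp ^ (1/p) with hGGdef
    have hGG0 : 0 ≤ GG := Real.rpow_nonneg hGp0 _
    obtain ⟨c, hc⟩ := exists_c hSHT hs hppos hb hq hball x₀ hg0 hgm hE hgrad hIp
    set A := K₁ * GG with hAdef
    have hA' : 0 ≤ A := by positivity
    have hptw : ∀ x, x ∉ E → |u x - c| ≤ 2 * A ^ σ * (g x) ^ (1-σ) := by
      intro x hx
      apply opt_bound hs (show s < ω/p by linarith) hA' (hg0 x)
        (show σ = s/(ω/p) by rw [hσdef]; field_simp; try ring)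
      intro r hr
      exact hc x hx r hr
    have hDne : ENNReal.ofReal (2*A^σ) ^ pst ≠ ⊤ :=
      ENNReal.rpow_ne_top_of_nonneg hpstpos.le ENNReal.ofReal_ne_top
    have hae : ∀ᵐ x ∂μ, ENNReal.ofReal |u x - c| ^ pst ≤
        ENNReal.ofReal (2*A^σ) ^ pst * ENNReal.ofReal (g x) ^ p := by
      have haeE : ∀ᵐ x ∂μ, x ∉ E := measure_eq_zero_iff_ae_notMem.mp hE
      filter_upwards [haeE] with x hx
      have hb1 : ENNReal.ofReal |u x - c| ^ pst ≤
          ENNReal.ofReal (2*A^σ * (g x)^(1-σ)) ^ pst :=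
        ENNReal.rpow_le_rpow (ENNReal.ofReal_le_ofReal (hptw x hx)) hpstpos.le
      refine hb1.trans (le_of_eq ?_)
      calc ENNReal.ofReal (2*A^σ * (g x)^(1-σ)) ^ pst
          = (ENNReal.ofReal (2*A^σ) * ENNReal.ofReal ((g x)^(1-σ))) ^ pst := by
            rw [ENNReal.ofReal_mul (by positivity)]
        _ = ENNReal.ofReal (2*A^σ) ^ pst * ENNReal.ofReal ((g x)^(1-σ)) ^ pst :=
            ENNReal.mul_rpow_of_nonneg _ _ hpstpos.le
        _ = ENNReal.ofReal (2*A^σ) ^ pst * (ENNReal.ofReal (g x) ^ (1-σ)) ^ pst := by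
            rw [ENNReal.ofReal_rpow_of_nonneg (hg0 x) (by linarith : (0:ℝ) ≤ 1-σ)]
        _ = ENNReal.ofReal (2*A^σ) ^ pst * ENNReal.ofReal (g x) ^ p := by
            rw [← ENNReal.rpow_mul, hτpst]
    have hI1 : (∫⁻ x, ENNReal.ofReal |u x - c| ^ pst ∂μ) ≤
        ENNReal.ofReal (2*A^σ) ^ pst * Ip := by
      calc (∫⁻ x, ENNReal.ofReal |u x - c| ^ pst ∂μ)
          ≤ ∫⁻ x, ENNReal.ofReal (2*A^σ) ^ pst * ENNReal.ofReal (g x) ^ p ∂μ :=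
            lintegral_mono_ae hae
        _ = ENNReal.ofReal (2*A^σ) ^ pst * Ip := lintegral_const_mul' _ _ hDne
    have hfin : (∫⁻ x, ENNReal.ofReal |u x - c| ^ pst ∂μ) < ⊤ :=
      lt_of_le_of_lt hI1 (ENNReal.mul_lt_top hDne.lt_top (hIp.lt_top))
    refine ⟨c, hfin, ?_⟩
    have h2 : (∫⁻ x, ENNReal.ofReal |u x - c| ^ pst ∂μ) ^ (1/pst) ≤
        (ENNReal.ofReal (2*A^σ) ^ pst * Ip) ^ (1/pst) :=
      ENNReal.rpow_le_rpow hI1 (by positivity)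
    have h3 : (ENNReal.ofReal (2*A^σ) ^ pst * Ip) ^ (1/pst)
        = ENNReal.ofReal (2*A^σ) * Ip ^ (1/pst) := by
      rw [ENNReal.mul_rpow_of_nonneg _ _ (by positivity : (0:ℝ) ≤ 1/pst),
        ← ENNReal.rpow_mul, mul_one_div, div_self hpstpos.ne', ENNReal.rpow_one]
    have h4 : ENNReal.ofReal (2*A^σ) * Ip ^ (1/pst)
        = ENNReal.ofReal (2*A^σ * Gp^(1/pst)) := by
      rw [ENNReal.ofReal_mul (by positivity : (0:ℝ) ≤ 2*A^σ)]
      congr 1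
      rw [← ENNReal.ofReal_rpow_of_nonneg hGp0 (by positivity : (0:ℝ) ≤ 1/pst),
        hGpdef, ENNReal.ofReal_toReal hIp]
    have h5 : 2*A^σ * Gp^(1/pst) ≤ Ct * Gp^(1/p) := by
      rcases eq_or_lt_of_le hGp0 with h0 | h0
      · rw [← h0, Real.zero_rpow (by positivity : (1:ℝ)/pst ≠ 0),
          Real.zero_rpow (by positivity : (1:ℝ)/p ≠ 0), mul_zero, mul_zero]
        try exact le_refl 0
      · have hAσ : A ^ σ = K₁^σ * Gp^(σ/p) := by
          rw [hAdef, Real.mul_rpow hK₁.le hGG0, hGGdef, ← Real.rpow_mul hGp0,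
            show (1/p)*σ = σ/p by ring]
        have hGadd : Gp^(σ/p) * Gp^(1/pst) = Gp^(1/p) := by
          rw [← Real.rpow_add h0, hexp]
        refine le_of_eq ?_
        calc 2*A^σ * Gp^(1/pst) = 2*(K₁^σ * Gp^(σ/p)) * Gp^(1/pst) := by rw [hAσ]
          _ = 2*(K₁^σ)*(Gp^(σ/p) * Gp^(1/pst)) := by ring
          _ = 2*(K₁^σ)*Gp^(1/p) := by rw [hGadd]
          _ = Ct * Gp^(1/p) := by rw [hCtdef]
    have h6 : ENNReal.ofReal (Ct * Gp^(1/p)) = ENNReal.ofReal Ct * Ip ^ (1/p) := by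
      rw [ENNReal.ofReal_mul hCt.le]
      congr 1
      rw [← ENNReal.ofReal_rpow_of_nonneg hGp0 (by positivity : (0:ℝ) ≤ 1/p),
        hGpdef, ENNReal.ofReal_toReal hIp]
    calc (∫⁻ x, ENNReal.ofReal |u x - c| ^ pst ∂μ) ^ (1/pst)
        ≤ (ENNReal.ofReal (2*A^σ) ^ pst * Ip) ^ (1/pst) := h2
      _ = ENNReal.ofReal (2*A^σ * Gp^(1/pst)) := by rw [h3, h4]
      _ ≤ ENNReal.ofReal (Ct * Gp^(1/p)) := ENNReal.ofReal_le_ofReal h5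
      _ = ENNReal.ofReal Ct * Ip ^ (1/p) := h6
  -- choose the base gradient
  simp only [hajlaszSobolevNorm] at hnorm
  obtain ⟨g₀, hg₀lt⟩ := iInf_lt_iff.mp hnorm
  obtain ⟨hg₀, hF₀⟩ := iInf_lt_iff.mp hg₀lt
  have hIp₀ : (∫⁻ z, ENNReal.ofReal (g₀ z) ^ p ∂μ) ≠ ⊤ :=
    ((ENNReal.rpow_lt_top_iff_of_pos (by positivity : (0:ℝ) < 1/p)).mp hF₀).ne
  obtain ⟨C', hC'fin, hC'bd⟩ := key g₀ hg₀ hIp₀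
  refine ⟨C', hC'fin, ?_⟩
  have hT0 : ENNReal.ofReal Ct ≠ 0 := by
    simp only [ne_eq, ENNReal.ofReal_eq_zero, not_le]
    exact hCt
  have hTt : ENNReal.ofReal Ct ≠ ⊤ := ENNReal.ofReal_ne_top
  have hall : ∀ g : X → ℝ, IsGradient d μ s u g →
      (∫⁻ x, ENNReal.ofReal |u x - C'| ^ pst ∂μ) ^ (1/pst) ≤
        ENNReal.ofReal Ct * (∫⁻ z, ENNReal.ofReal (g z) ^ p ∂μ) ^ (1/p) := by
    intro g hg
    by_cases hIpg : (∫⁻ z, ENNReal.ofReal (g z) ^ p ∂μ) = ⊤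
    · rw [hIpg, ENNReal.top_rpow_of_pos (by positivity : (0:ℝ) < 1/p),
        ENNReal.mul_top hT0]
      exact le_top
    · obtain ⟨c, hcfin, hcbd⟩ := key g hg hIpg
      have hcC : c = C' := c_unique hμtop hu hpstpos hcfin hC'fin
      rw [hcC] at hcbd
      exact hcbd
  have hinf : (∫⁻ x, ENNReal.ofReal |u x - C'| ^ pst ∂μ) ^ (1/pst) / ENNReal.ofReal Ct ≤
      hajlaszSobolevNorm d μ s p u := by
    simp only [hajlaszSobolevNorm]
    refine le_iInf fun g => le_iInf fun hg => ?_
    rw [ENNReal.div_le_iff_le_mul (Or.inl hT0) (Or.inl hTt), mul_comm]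
    exact hall g hg
  rw [ENNReal.div_le_iff_le_mul (Or.inl hT0) (Or.inl hTt), mul_comm] at hinf
  exact hinf


end SHT
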